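/- arXiv:2012.05209 — 2 statements merged into one kernel-verified Lean document; each statement's English description precedes it below -/
import Mathlib

section
/- There is no set S of measurable functions from [0,∞) to ℝ satisfying all of the following: (i) the indicator function χ_[0,1) belongs to S; (ii) for every f ∈ S, the function x ↦ x·f(x) belongs to S; (iii) for every f ∈ S that is Lebesgue integrable on [0,∞), its Walsh–Fourier transform 𝔉f belongs to S; (iv) for every f ∈ S and every g ∈ L²([0,∞)), the product f·g is Lebesgue integrable on [0,∞). -/
open MeasureTheory Finset
open scoped ENNReal NNReal

/-- The `j`-th binary digit of `x` after the binary point. -/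
noncomputable def binDigit (j : ℕ) (x : ℝ) : ℕ := (⌊(2:ℝ)^j * x⌋).toNat % 2

/-- The Walsh function `w_k(x) = (-1)^{∑ k_i d_{i+1}(x)}`. -/
noncomputable def walsh (k : ℕ) (x : ℝ) : ℝ :=
  (-1 : ℝ) ^ (∑ i ∈ Finset.range (k+1), (k / 2^i % 2) * binDigit (i+1) x)

/-- The generalized Walsh kernel `ψ(x,y) = w_{⌊y⌋}(x) · w_{⌊x⌋}(y)`. -/
noncomputable def walshKernel (x y : ℝ) : ℝ := walsh (⌊y⌋).toNat x * walsh (⌊x⌋).toNat y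

/-- The Walsh–Fourier transform `(𝔉f)(y) = ∫_{[0,∞)} ψ(x,y) f(x) dx`. -/
noncomputable def walshFourier (f : ℝ → ℝ) (y : ℝ) : ℝ :=
  ∫ x in Set.Ici (0:ℝ), walshKernel x y * f x

/-- The dyadic translate `x ⊕ j = (⌊x⌋ XOR j) + (x - ⌊x⌋)`. -/
noncomputable def dyadicAdd (x : ℝ) (j : ℕ) : ℝ := ((⌊x⌋.toNat ^^^ j : ℕ) : ℝ) + (x - ⌊x⌋)

lemma measurable_binDigit (j : ℕ) : Measurable (binDigit j) := by
  have h1 : Measurable fun x : ℝ => ⌊(2:ℝ)^j * x⌋ :=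
    Int.measurable_floor.comp (measurable_const.mul measurable_id)
  exact (measurable_from_top (f := fun n : ℤ => n.toNat % 2)).comp h1

lemma walsh_zero (y : ℝ) : walsh 0 y = 1 := by
  simp [walsh]

lemma walsh_pow2 (m : ℕ) (x : ℝ) : walsh (2^m) x = (-1:ℝ) ^ binDigit (m+1) x := by
  unfold walsh
  congr 1
  rw [Finset.sum_eq_single_of_mem m]
  · simp [Nat.pow_div (le_refl m)]
  · exact Finset.mem_range.2 (Nat.lt_succ_of_lt (Nat.lt_two_pow_self (n := m)))
  · intro i hi hne
    rcases lt_or_gt_of_ne hne with h | h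
    · -- i < m : 2^m / 2^i = 2^(m-i), even
      have : 2^m / 2^i = 2^(m-i) := Nat.pow_div h.le (by norm_num)
      rw [this]
      have h2 : (2:ℕ) ∣ 2^(m-i) := dvd_pow_self 2 (Nat.sub_ne_zero_of_lt h)
      have : 2^(m-i) % 2 = 0 := by omega
      simp [this]
    · have : 2^m / 2^i = 0 := Nat.div_eq_of_lt (Nat.pow_lt_pow_right one_lt_two h)
      simp [this]

lemma neg_one_pow_mod2 (j : ℕ) : ((-1:ℝ)) ^ (j % 2) = (-1:ℝ) ^ j := by
  conv_rhs => rw [← Nat.div_add_mod j 2]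
  rw [pow_add, pow_mul]
  norm_num

lemma sum_alt (K : ℕ) : ∑ j ∈ Finset.range (2*K), ((-1:ℝ))^j * (2*j+1) = -(2*K) := by
  induction K with
  | zero => simp
  | succ K ih =>
    have h : 2 * (K+1) = (2*K) + 1 + 1 := by ring
    rw [h, Finset.sum_range_succ, Finset.sum_range_succ, ih]
    have he : ((-1:ℝ))^(2*K) = 1 := by rw [pow_mul]; norm_num
    have ho : ((-1:ℝ))^(2*K+1) = -1 := by rw [pow_succ, he]; ring
    rw [he, ho]
    push_cast
    ring

lemma binDigit_eq_on (m j : ℕ) {x : ℝ} (h1 : (j:ℝ)/2^(m+1) ≤ x) (h2 : x < (j+1:ℝ)/2^(m+1)) :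
    binDigit (m+1) x = j % 2 := by
  have hN : (0:ℝ) < 2^(m+1) := by positivity
  have hfl : ⌊(2:ℝ)^(m+1) * x⌋ = (j:ℤ) := by
    rw [Int.floor_eq_iff]
    constructor
    · push_cast
      calc (j:ℝ) = ((j:ℝ)/2^(m+1)) * 2^(m+1) := by field_simp
        _ ≤ x * 2^(m+1) := by nlinarith
        _ = 2^(m+1) * x := by ring
    · push_cast
      calc (2:ℝ)^(m+1) * x < 2^(m+1) * ((j+1:ℝ)/2^(m+1)) := by nlinarith
        _ = j+1 := by field_simp
  unfold binDigit
  rw [hfl]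
  simp

lemma key_integral (m : ℕ) :
    ∫ x in Set.Ico (0:ℝ) 1, ((-1:ℝ) ^ binDigit (m+1) x * x) = -(1/2^(m+2)) := by
  set N : ℕ := 2^(m+1) with hNdef
  have hN0 : (0:ℝ) < (N:ℝ) := by positivity
  set a : ℕ → ℝ := fun j => (j:ℝ)/(N:ℝ) with hadef
  set h : ℝ → ℝ := fun x => (-1:ℝ) ^ binDigit (m+1) x * x with hhdef
  have hmono : ∀ k : ℕ, a k ≤ a (k+1) := by
    intro k
    simp only [hadef]
    gcongr
    push_cast; linarith
  have hae : ∀ k : ℕ, h =ᵐ[volume.restrict (Set.Ioc (a k) (a (k+1)))]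
      fun x => (-1:ℝ)^k * x := by
    intro k
    rw [Filter.EventuallyEq, ae_restrict_iff' measurableSet_Ioc]
    have h0 : ∀ᵐ (x:ℝ), x ≠ a (k+1) := by
      rw [ae_iff]
      refine measure_mono_null (fun x hx => ?_) (Real.volume_singleton (a := a (k+1)))
      simpa using hx
    filter_upwards [h0] with x hx hxIoc
    have hx1 : a k ≤ x := le_of_lt hxIoc.1
    have hx2 : x < a (k+1) := lt_of_le_of_ne hxIoc.2 hx
    have hb : binDigit (m+1) x = k % 2 := by
      apply binDigit_eq_on m k
      · simpa [hadef, hNdef] using hx1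
      · have := hx2; simp only [hadef, hNdef] at this; push_cast at this ⊢; convert this using 2
    simp only [hhdef, hb, neg_one_pow_mod2]
  have hcont : ∀ k : ℕ, Continuous (fun x : ℝ => (-1:ℝ)^k * x) :=
    fun k => continuous_const.mul continuous_id
  have hint : ∀ k : ℕ, IntervalIntegrable h volume (a k) (a (k+1)) := by
    intro k
    rw [intervalIntegrable_iff_integrableOn_Ioc_of_le (hmono k)]
    exact ((hcont k).integrableOn_Ioc).congr_fun_ae (hae k).symm
  have hpiece : ∀ k : ℕ, ∫ x in a k..a (k+1), h x = (-1:ℝ)^k * ((2*k+1)/(2*(N:ℝ)^2)) := by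
    intro k
    rw [intervalIntegral.integral_of_le (hmono k), integral_congr_ae (hae k),
      ← intervalIntegral.integral_of_le (hmono k), intervalIntegral.integral_const_mul,
      integral_id]
    have : (a (k+1))^2 - (a k)^2 = (2*(k:ℝ)+1)/(N:ℝ)^2 := by
      simp only [hadef]
      field_simp
      push_cast
      ring
    rw [this]
    ring
  have hsum := intervalIntegral.sum_integral_adjacent_intervals (μ := volume) (a := a)
    (n := N) (fun k _ => hint k)
  have ha0 : a 0 = 0 := by simp [hadef]
  have haN : a N = 1 := by simp only [hadef]; exact div_self hN0.ne'
  rw [ha0, haN] at hsum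
  have htot : ∫ x in (0:ℝ)..1, h x = -(1/2^(m+2)) := by
    rw [← hsum]
    have : ∀ k ∈ Finset.range N, ∫ x in a k..a (k+1), h x
        = ((-1:ℝ)^k * (2*k+1))/(2*(N:ℝ)^2) := by
      intro k _
      rw [hpiece k]; ring
    rw [Finset.sum_congr rfl this, ← Finset.sum_div]
    have h2N : N = 2 * 2^m := by rw [hNdef]; ring
    have := sum_alt (2^m)
    rw [h2N]
    rw [this]
    have hNR : ((2:ℝ)*(2^m:ℕ)) = (N:ℝ) := by rw [h2N]; push_cast; ring
    push_cast
    rw [pow_add]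
    push_cast
    field_simp
  rw [MeasureTheory.integral_Ico_eq_integral_Ioo,
    ← MeasureTheory.integral_Ioc_eq_integral_Ioo,
    ← intervalIntegral.integral_of_le (by norm_num : (0:ℝ) ≤ 1)]
  exact htot

noncomputable def f1 : ℝ → ℝ :=
  fun x => x * Set.indicator (Set.Ico (0:ℝ) 1) (fun _ => (1:ℝ)) x

lemma WF_eval (m : ℕ) (y : ℝ) (hy : y ∈ Set.Ico ((2:ℝ)^m) (2^m+1)) :
    walshFourier f1 y = -(1/2^(m+2)) := by
  have hfl : ⌊y⌋ = ((2^m : ℕ) : ℤ) := by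
    rw [Int.floor_eq_iff]
    constructor
    · push_cast; exact hy.1
    · push_cast; exact hy.2
  have htn : (⌊y⌋).toNat = 2^m := by rw [hfl, Int.toNat_natCast]
  unfold walshFourier
  have hrw : (fun x => walshKernel x y * f1 x)
      = Set.indicator (Set.Ico (0:ℝ) 1) (fun x => walshKernel x y * x) := by
    funext x
    by_cases hx : x ∈ Set.Ico (0:ℝ) 1
    · simp [f1, hx, Set.indicator_of_mem]
    · simp [f1, hx, Set.indicator_of_notMem]
  rw [hrw, MeasureTheory.integral_indicator measurableSet_Ico,
    Measure.restrict_restrict measurableSet_Ico,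
    Set.inter_eq_left.2 (fun x hx => hx.1)]
  rw [setIntegral_congr_fun measurableSet_Ico (g := fun x => (-1:ℝ) ^ binDigit (m+1) x * x) ?_]
  · exact key_integral m
  · intro x hx
    have hfx : ⌊x⌋ = 0 := Int.floor_eq_zero_iff.2 hx
    simp only [walshKernel, htn, hfx, Int.toNat_zero, walsh_zero, mul_one, walsh_pow2]

noncomputable def gfun (x : ℝ) : ℝ :=
  if ⌊x⌋.toNat = 2 ^ Nat.log 2 ⌊x⌋.toNat ∧ 1 ≤ ⌊x⌋ then
    1 / (Nat.log 2 ⌊x⌋.toNat + 1) else 0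

lemma measurable_gfun : Measurable gfun := by
  have : gfun = (fun n : ℤ =>
      if n.toNat = 2 ^ Nat.log 2 n.toNat ∧ 1 ≤ n then
        (1 / (Nat.log 2 n.toNat + 1) : ℝ) else 0) ∘ (fun x : ℝ => ⌊x⌋) := rfl
  rw [this]
  exact measurable_from_top.comp Int.measurable_floor

lemma floor_mem_Ico (m : ℕ) (x : ℝ) (hx : x ∈ Set.Ico ((2:ℝ)^m) (2^m+1)) :
    ⌊x⌋ = ((2^m : ℕ) : ℤ) := by
  rw [Int.floor_eq_iff]
  constructor
  · push_cast; exact hx.1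
  · push_cast; exact hx.2

lemma gfun_eval (m : ℕ) (x : ℝ) (hx : x ∈ Set.Ico ((2:ℝ)^m) (2^m+1)) :
    gfun x = 1 / (m+1) := by
  have hfl := floor_mem_Ico m x hx
  have htn : ⌊x⌋.toNat = 2^m := by rw [hfl, Int.toNat_natCast]
  have hlog : Nat.log 2 (2^m) = m := Nat.log_pow (by norm_num) m
  unfold gfun
  rw [htn, hlog, if_pos ⟨rfl, by rw [hfl]; exact_mod_cast Nat.one_le_two_pow⟩]

lemma summable_sq : Summable (fun m : ℕ => ((1:ℝ)/(m+1))^2) := by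
  have h2 : Summable (fun n : ℕ => 1/((n:ℝ)+1)^(2:ℕ)) := by
    have h1 : Summable (fun n : ℕ => 1/(n:ℝ)^(2:ℕ)) := Real.summable_one_div_nat_pow.2 Nat.one_lt_two
    have := (summable_nat_add_iff (f := fun n : ℕ => 1/(n:ℝ)^(2:ℕ)) 1).2 h1
    refine this.congr fun m => ?_
    push_cast
    ring
  refine h2.congr fun m => ?_
  rw [div_pow, one_pow]

lemma memL2_gfun : MemLp gfun 2 (volume.restrict (Set.Ici (0:ℝ))) := by
  have hasm : AEStronglyMeasurable gfun (volume.restrict (Set.Ici (0:ℝ))) :=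
    measurable_gfun.aestronglyMeasurable
  rw [memLp_two_iff_integrable_sq hasm]
  refine ⟨(measurable_gfun.pow_const 2).aestronglyMeasurable, ?_⟩
  rw [hasFiniteIntegral_def]
  have hpt : ∀ x : ℝ, (‖gfun x ^ 2‖₊ : ℝ≥0∞) ≤
      ∑' m : ℕ, (Set.Ico ((2:ℝ)^m) (2^m+1)).indicator
        (fun _ => ENNReal.ofReal (((1:ℝ)/(m+1))^2)) x := by
    intro x
    by_cases hc : ⌊x⌋.toNat = 2 ^ Nat.log 2 ⌊x⌋.toNat ∧ 1 ≤ ⌊x⌋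
    · set m := Nat.log 2 ⌊x⌋.toNat with hm
      have hfl : ⌊x⌋ = ((2^m : ℕ) : ℤ) := by
        rw [← hc.1, Int.toNat_of_nonneg (by linarith [hc.2])]
      have hxm : x ∈ Set.Ico ((2:ℝ)^m) (2^m+1) := by
        constructor
        · have := Int.floor_le x
          rw [hfl] at this
          push_cast at this
          exact this
        · have := Int.lt_floor_add_one x
          rw [hfl] at this
          push_cast at this
          exact this
      have hg : gfun x = 1/(m+1) := gfun_eval m x hxm
      calc (‖gfun x ^ 2‖₊ : ℝ≥0∞) = ENNReal.ofReal (((1:ℝ)/(m+1))^2) := by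
            rw [← enorm_eq_nnnorm, ← ofReal_norm, hg, Real.norm_of_nonneg (sq_nonneg _)]
        _ = (Set.Ico ((2:ℝ)^m) (2^m+1)).indicator
              (fun _ => ENNReal.ofReal (((1:ℝ)/(m+1))^2)) x := by
            rw [Set.indicator_of_mem hxm]
        _ ≤ _ := ENNReal.le_tsum m
    · have : gfun x = 0 := if_neg hc
      simp [this]
  calc ∫⁻ a, (‖gfun a ^ 2‖₊ : ℝ≥0∞) ∂(volume.restrict (Set.Ici (0:ℝ)))
      ≤ ∫⁻ a, (∑' m : ℕ, (Set.Ico ((2:ℝ)^m) (2^m+1)).indicator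
          (fun _ => ENNReal.ofReal (((1:ℝ)/(m+1))^2)) a) ∂(volume.restrict (Set.Ici (0:ℝ))) :=
        lintegral_mono hpt
    _ = ∑' m : ℕ, ∫⁻ a, (Set.Ico ((2:ℝ)^m) (2^m+1)).indicator
          (fun _ => ENNReal.ofReal (((1:ℝ)/(m+1))^2)) a ∂(volume.restrict (Set.Ici (0:ℝ))) :=
        lintegral_tsum (fun m => (measurable_const.indicator measurableSet_Ico).aemeasurable)
    _ ≤ ∑' m : ℕ, ENNReal.ofReal (((1:ℝ)/(m+1))^2) := by
        refine ENNReal.tsum_le_tsum fun m => ?_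
        rw [lintegral_indicator measurableSet_Ico, setLIntegral_const]
        calc ENNReal.ofReal (((1:ℝ)/(m+1))^2) * (volume.restrict (Set.Ici (0:ℝ))) (Set.Ico ((2:ℝ)^m) (2^m+1))
            ≤ ENNReal.ofReal (((1:ℝ)/(m+1))^2) * volume (Set.Ico ((2:ℝ)^m) (2^m+1)) := by
              gcongr
              exact Measure.restrict_le_self
          _ = ENNReal.ofReal (((1:ℝ)/(m+1))^2) := by
              rw [Real.volume_Ico]
              norm_num
    _ < ⊤ := by
        rw [← ENNReal.ofReal_tsum_of_nonneg (fun m => sq_nonneg _) summable_sq]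
        exact ENNReal.ofReal_lt_top

lemma tsum_harm : (∑' m : ℕ, ENNReal.ofReal ((1:ℝ)/(4*(m+1)))) = ⊤ := by
  by_contra h
  have hs : Summable (fun m : ℕ => ((1:ℝ)/(4*(m+1))).toNNReal) :=
    ENNReal.tsum_coe_ne_top_iff_summable.1 h
  have hs2 : Summable (fun m : ℕ => (1:ℝ)/(4*(m+1))) := by
    have := NNReal.summable_coe.2 hs
    exact this.congr fun m => Real.coe_toNNReal _ (by positivity)
  have hs3 : Summable (fun m : ℕ => (1:ℝ)/((m:ℝ)+1)) := by
    have := hs2.mul_left 4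
    refine this.congr fun m => ?_
    field_simp
  have hs4 : Summable (fun n : ℕ => 1/(n:ℝ)) := by
    refine (summable_nat_add_iff (f := fun n : ℕ => 1/(n:ℝ)) 1).1 ?_
    exact hs3.congr fun n => by push_cast; ring
  exact Real.not_summable_one_div_natCast hs4

/-- There is no space of measurable functions on the dyadic half-line containing
`χ_[0,1)`, invariant under multiplication by `x` and under the Walsh–Fourier
transform, on which every element of `L²([0,∞))` acts by the inner product. -/
theorem no_dyadic_distribution_space :
    ¬ ∃ S : Set (ℝ → ℝ),
      (∀ f ∈ S, Measurable f) ∧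
      (Set.indicator (Set.Ico (0:ℝ) 1) (fun _ => (1:ℝ)) ∈ S) ∧
      (∀ f ∈ S, (fun x => x * f x) ∈ S) ∧
      (∀ f ∈ S, IntegrableOn f (Set.Ici 0) volume → walshFourier f ∈ S) ∧
      (∀ f ∈ S, ∀ g : ℝ → ℝ, MemLp g 2 (volume.restrict (Set.Ici 0)) →
        IntegrableOn (fun x => f x * g x) (Set.Ici 0) volume) := by
  rintro ⟨S, hMeas, hInd, hMul, hWF, hPair⟩
  have hf1S : f1 ∈ S := hMul _ hInd
  have hf1int : IntegrableOn f1 (Set.Ici 0) volume := by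
    have heq : f1 = Set.indicator (Set.Ico (0:ℝ) 1) (fun x => x) := by
      funext x
      by_cases hx : x ∈ Set.Ico (0:ℝ) 1 <;> simp [f1, hx]
    rw [heq, IntegrableOn, integrable_indicator_iff measurableSet_Ico, IntegrableOn,
      Measure.restrict_restrict measurableSet_Ico]
    have hss : Set.Ico (0:ℝ) 1 ∩ Set.Ici 0 = Set.Ico 0 1 :=
      Set.inter_eq_left.2 fun x hx => hx.1
    rw [hss]
    exact (continuous_id.integrableOn_Icc (a := (0:ℝ)) (b := 1)).mono_set
      Set.Ico_subset_Icc_self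
  have hFS : walshFourier f1 ∈ S := hWF _ hf1S hf1int
  have hF2S : (fun x => x * walshFourier f1 x) ∈ S := hMul _ hFS
  have hInt := hPair _ hF2S gfun memL2_gfun
  have hfin := hInt.2
  rw [hasFiniteIntegral_def] at hfin
  set T : ℕ → Set ℝ := fun m => Set.Ico ((2:ℝ)^m) (2^m+1) with hT
  have hTm : ∀ m, MeasurableSet (T m) := fun m => measurableSet_Ico
  have key : ∀ a b : ℕ, a < b → Disjoint (T a) (T b) := by
    intro a b hab
    rw [Set.disjoint_left]
    intro x hxa hxb
    have h1 : x < 2^a + 1 := hxa.2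
    have h2 : (2:ℝ)^b ≤ x := hxb.1
    have h3 : (2:ℝ)^(a+1) ≤ 2^b := pow_le_pow_right₀ one_le_two hab
    have h4 : (1:ℝ) ≤ (2:ℝ)^a := one_le_pow₀ (by norm_num)
    have h5 : (2:ℝ)^a + 1 ≤ 2^(a+1) := by rw [pow_succ]; nlinarith
    linarith
  have hTd : Pairwise (Function.onFun Disjoint T) := by
    intro i j hij
    rcases lt_or_gt_of_ne hij with h | h
    · exact key _ _ h
    · exact (key _ _ h).symm
  have hsub : (⋃ m, T m) ⊆ Set.Ici (0:ℝ) := by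
    intro x hx
    rcases Set.mem_iUnion.1 hx with ⟨m, hm⟩
    have h0 : (0:ℝ) ≤ 2^m := by positivity
    exact le_trans h0 hm.1
  have hlow : ∀ m : ℕ, ENNReal.ofReal ((1:ℝ)/(4*(m+1))) ≤
      ∫⁻ x in T m, (‖x * walshFourier f1 x * gfun x‖₊ : ℝ≥0∞) ∂volume := by
    intro m
    have hpt : ∀ x ∈ T m, ENNReal.ofReal ((1:ℝ)/(4*(m+1))) ≤
        (‖x * walshFourier f1 x * gfun x‖₊ : ℝ≥0∞) := by
      intro x hx
      rw [← enorm_eq_nnnorm, ← ofReal_norm]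
      apply ENNReal.ofReal_le_ofReal
      have hWFx := WF_eval m x hx
      have hg := gfun_eval m x hx
      have hx0 : (2:ℝ)^m ≤ x := hx.1
      have hxpos : (0:ℝ) ≤ x := le_trans (by positivity) hx0
      have heq2 : x * walshFourier f1 x * gfun x = -(x * (1/2^(m+2)) * (1/(m+1))) := by
        rw [hWFx, hg]; ring
      rw [heq2, norm_neg, Real.norm_of_nonneg (by positivity)]
      have hfin2 : (1:ℝ)/(4*((m:ℝ)+1)) = (2^m * (1/2^(m+2))) * (1/(m+1)) := by
        rw [pow_add]
        field_simp
        ring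
      rw [hfin2]
      gcongr
    calc ENNReal.ofReal ((1:ℝ)/(4*(m+1)))
        = ∫⁻ _ in T m, ENNReal.ofReal ((1:ℝ)/(4*(m+1))) ∂volume := by
          rw [setLIntegral_const, hT, Real.volume_Ico]
          norm_num
      _ ≤ _ := setLIntegral_mono' (hTm m) hpt
  have htop : (⊤:ℝ≥0∞) ≤ ∫⁻ x in Set.Ici (0:ℝ),
      (‖x * walshFourier f1 x * gfun x‖₊ : ℝ≥0∞) ∂volume := by
    calc (⊤:ℝ≥0∞) = ∑' m : ℕ, ENNReal.ofReal ((1:ℝ)/(4*(m+1))) := tsum_harm.symm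
      _ ≤ ∑' m : ℕ, ∫⁻ x in T m, (‖x * walshFourier f1 x * gfun x‖₊ : ℝ≥0∞) ∂volume :=
          ENNReal.tsum_le_tsum hlow
      _ = ∫⁻ x in ⋃ m, T m, (‖x * walshFourier f1 x * gfun x‖₊ : ℝ≥0∞) ∂volume :=
          (lintegral_iUnion hTm hTd _).symm
      _ ≤ _ := lintegral_mono_set hsub
  exact absurd (lt_of_le_of_lt htop hfin) (lt_irrefl ⊤)
end

section
/- Let F : [0,∞) → ℝ be defined by F(y) = −2^{−(n+1)} for y ∈ [2^n, 2^n + 1) with n ∈ ℕ, n ≥ 1, and F(y) = 0 otherwise, and let g : [0,∞) → ℝ be defined by g(y) = −1/(n+1) for y ∈ [2^n, 2^n + 1) with n ∈ ℕ, n ≥ 1, and g(y) = 0 otherwise. Then the function y ↦ g(y)·y·F(y) is nonnegative and is NOT Lebesgue integrable on [0,∞); indeed ∫_{[0,∞)} g(y)·y·F(y) dy = Σ_{n=1}^{∞} (1/(n+1))·(1/2 + 2^{−n−2}) = +∞. -/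
open MeasureTheory Filter
open scoped ENNReal NNReal

lemma aux_not_summable : ¬ Summable (fun n : ℕ => 1/(2*((n:ℝ)+2))) := by
  intro h
  have h2 : Summable (fun n : ℕ => 1/((n:ℝ)+2)) := by
    have heq : (fun n : ℕ => 1/((n:ℝ)+2)) = fun n : ℕ => 2 * (1/(2*((n:ℝ)+2))) := by
      funext n
      have : ((n:ℝ)+2) ≠ 0 := by positivity
      field_simp
    rw [heq]
    exact h.mul_left 2
  have h3 : Summable (fun n : ℕ => 1/((n:ℝ))) := by
    rw [← summable_nat_add_iff 2]
    have heq : (fun n : ℕ => 1/(((n+2:ℕ)):ℝ)) = fun n : ℕ => 1/((n:ℝ)+2) := by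
      funext n; push_cast; ring
    exact heq ▸ h2
  exact Real.not_summable_one_div_natCast h3

/-- With `F(y) = -2^{-(n+1)}` and `g(y) = -1/(n+1)` on `[2^n, 2^n+1)` for `n ≥ 1`
(both vanishing elsewhere), the function `y ↦ g(y)·y·F(y)` is nonnegative but not
Lebesgue integrable on `[0,∞)`: its integral is `∑_{n≥1} (1/(n+1))(1/2 + 2^{-n-2}) = +∞`. -/
theorem g_y_F_not_integrable (F g : ℝ → ℝ)
    (hF1 : ∀ n : ℕ, 1 ≤ n → ∀ y ∈ Set.Ico ((2:ℝ)^n) ((2:ℝ)^n + 1),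
      F y = -(1 / 2^(n+1)))
    (hF2 : ∀ y : ℝ, (∀ n : ℕ, 1 ≤ n → y ∉ Set.Ico ((2:ℝ)^n) ((2:ℝ)^n + 1)) → F y = 0)
    (hg1 : ∀ n : ℕ, 1 ≤ n → ∀ y ∈ Set.Ico ((2:ℝ)^n) ((2:ℝ)^n + 1),
      g y = -(1 / ((n : ℝ) + 1)))
    (hg2 : ∀ y : ℝ, (∀ n : ℕ, 1 ≤ n → y ∉ Set.Ico ((2:ℝ)^n) ((2:ℝ)^n + 1)) → g y = 0) :
    (∀ y : ℝ, 0 ≤ y → 0 ≤ g y * (y * F y)) ∧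
    ¬ IntegrableOn (fun y => g y * (y * F y)) (Set.Ici 0) volume ∧
    (∫⁻ y in Set.Ici (0:ℝ), ENNReal.ofReal (g y * (y * F y))) = ⊤ ∧
    Tendsto (fun N : ℕ => ∑ n ∈ Finset.Icc 1 N,
      (1 / ((n : ℝ) + 1)) * (1/2 + 2^(-(n:ℤ)-2))) atTop atTop := by
  -- value on the intervals
  have hval : ∀ n : ℕ, 1 ≤ n → ∀ y ∈ Set.Ico ((2:ℝ)^n) ((2:ℝ)^n + 1),
      g y * (y * F y) = y * (1/((n:ℝ)+1) * (1/2^(n+1))) := by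
    intro n hn y hy
    rw [hg1 n hn y hy, hF1 n hn y hy]; ring
  -- 1) nonnegativity
  have h1 : ∀ y : ℝ, 0 ≤ y → 0 ≤ g y * (y * F y) := by
    intro y hy
    by_cases h : ∀ n : ℕ, 1 ≤ n → y ∉ Set.Ico ((2:ℝ)^n) ((2:ℝ)^n + 1)
    · rw [hg2 y h, zero_mul]
    · push_neg at h
      obtain ⟨n, hn, hmem⟩ := h
      rw [hval n hn y hmem]
      have : (0:ℝ) ≤ 1/((n:ℝ)+1) * (1/2^(n+1)) := by positivity
      exact mul_nonneg hy this
  -- 3) the lintegral is infinite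
  have h3 : (∫⁻ y in Set.Ici (0:ℝ), ENNReal.ofReal (g y * (y * F y))) = ⊤ := by
    set S : ℕ → Set ℝ := fun n => Set.Ico ((2:ℝ)^(n+1)) ((2:ℝ)^(n+1) + 1) with hSdef
    have hSm : ∀ n, MeasurableSet (S n) := fun n => measurableSet_Ico
    have hdisj : Pairwise (Function.onFun Disjoint S) := by
      intro m n hmn
      wlog h : m < n generalizing m n
      · exact (this hmn.symm (by omega)).symm
      rw [Function.onFun, Set.disjoint_left]
      intro x hx1 hx2
      have h1' : (1:ℝ) ≤ 2^(m+1) := one_le_pow₀ (by norm_num)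
      have h2' : (2:ℝ)^(m+2) ≤ 2^(n+1) :=
        pow_le_pow_right₀ (by norm_num) (by omega)
      have h3' : (2:ℝ)^(m+2) = 2^(m+1) + 2^(m+1) := by ring
      have := hx1.2
      have := hx2.1
      simp only [hSdef, Set.mem_Ico] at hx1 hx2
      linarith [hx1.2, hx2.1]
    have hsub : (⋃ n, S n) ⊆ Set.Ici (0:ℝ) := by
      intro x hx
      obtain ⟨n, hn⟩ := Set.mem_iUnion.mp hx
      have h0 : (0:ℝ) ≤ 2^(n+1) := by positivity
      exact le_trans h0 hn.1
    have hmono := lintegral_mono_set (μ := volume)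
      (f := fun y => ENNReal.ofReal (g y * (y * F y))) hsub
    rw [lintegral_iUnion hSm hdisj] at hmono
    have hlow : ∀ n : ℕ, ENNReal.ofReal (1/(2*((n:ℝ)+2)))
        ≤ ∫⁻ y in S n, ENNReal.ofReal (g y * (y * F y)) := by
      intro n
      have hvol : volume (S n) = 1 := by
        rw [hSdef]; simp [Real.volume_Ico]
      calc ENNReal.ofReal (1/(2*((n:ℝ)+2)))
          = ∫⁻ _ in S n, ENNReal.ofReal (1/(2*((n:ℝ)+2))) ∂volume := by
            rw [setLIntegral_const, hvol, mul_one]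
        _ ≤ _ := by
            apply setLIntegral_mono' (hSm n)
            intro y hy
            apply ENNReal.ofReal_le_ofReal
            have hy' : y ∈ Set.Ico ((2:ℝ)^(n+1)) ((2:ℝ)^(n+1) + 1) := hy
            rw [hval (n+1) (by omega) y hy']
            have hyge : (2:ℝ)^(n+1) ≤ y := hy'.1
            have hpos : (0:ℝ) ≤ 1/(((n+1:ℕ):ℝ)+1) * (1/2^(n+1+1)) := by positivity
            have he : (1/(((n+1:ℕ):ℝ)+1) * (1/(2:ℝ)^(n+1+1))) * 2^(n+1)
                = 1/(2*((n:ℝ)+2)) := by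
              push_cast
              rw [pow_succ]
              have h2 : ((n:ℝ)+1+1) ≠ 0 := by positivity
              have h2' : ((2:ℝ)^(n+1)) ≠ 0 := by positivity
              field_simp
              ring
            calc 1/(2*((n:ℝ)+2))
                = (1/(((n+1:ℕ):ℝ)+1) * (1/2^(n+1+1))) * 2^(n+1) := he.symm
              _ ≤ (1/(((n+1:ℕ):ℝ)+1) * (1/2^(n+1+1))) * y :=
                  mul_le_mul_of_nonneg_left hyge hpos
              _ = y * (1/(((n+1:ℕ):ℝ)+1) * (1/2^(n+1+1))) := by ring
    have htop : ∑' n : ℕ, ENNReal.ofReal (1/(2*((n:ℝ)+2))) = ⊤ := by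
      by_contra h
      have hsum : Summable (fun n : ℕ => (1/(2*((n:ℝ)+2))).toNNReal) := by
        rw [← ENNReal.tsum_coe_ne_top_iff_summable]
        simpa [ENNReal.ofReal] using h
      have h2 := NNReal.summable_coe.mpr hsum
      have heq : (fun n : ℕ => ((1/(2*((n:ℝ)+2))).toNNReal : ℝ))
          = fun n : ℕ => 1/(2*((n:ℝ)+2)) := by
        funext n
        exact Real.coe_toNNReal _ (by positivity)
      rw [heq] at h2
      exact aux_not_summable h2
    have : (⊤ : ℝ≥0∞) ≤ ∫⁻ y in Set.Ici (0:ℝ), ENNReal.ofReal (g y * (y * F y)) := by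
      rw [← htop]
      exact le_trans (ENNReal.tsum_le_tsum hlow) hmono
    exact top_le_iff.mp this
  -- 2) not integrable
  have h2 : ¬ IntegrableOn (fun y => g y * (y * F y)) (Set.Ici 0) volume := by
    intro hi
    have hfin : (∫⁻ y in Set.Ici (0:ℝ), (‖g y * (y * F y)‖₊ : ENNReal)) < ⊤ := hi.2
    have hle : (∫⁻ y in Set.Ici (0:ℝ), ENNReal.ofReal (g y * (y * F y)))
        ≤ ∫⁻ y in Set.Ici (0:ℝ), (‖g y * (y * F y)‖₊ : ENNReal) := by
      apply lintegral_mono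
      intro y
      exact Real.ofReal_le_enorm _
    rw [h3] at hle
    exact absurd (lt_of_le_of_lt hle hfin) (lt_irrefl ⊤)
  refine ⟨h1, h2, h3, ?_⟩
  -- 4) divergence of the partial sums
  have hdiv : Tendsto (fun N : ℕ => ∑ i ∈ Finset.range N, 1/(2*((i:ℝ)+2))) atTop atTop := by
    rw [← not_summable_iff_tendsto_nat_atTop_of_nonneg (fun n => by positivity)]
    exact aux_not_summable
  apply tendsto_atTop_mono _ hdiv
  intro N
  rw [← Finset.Ico_add_one_right_eq_Icc, Finset.sum_Ico_eq_sum_range]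
  simp only [Nat.succ_sub_one, Nat.add_sub_cancel]
  apply Finset.sum_le_sum
  intro i _
  have hz : (0:ℝ) ≤ 2^(-((1+i:ℕ):ℤ)-2) := by positivity
  have hc : ((1+i:ℕ):ℝ) = 1 + (i:ℝ) := by push_cast; ring
  rw [hc]
  have he : 1/(2*((i:ℝ)+2)) = (1/(1+(i:ℝ)+1)) * (1/2) := by
    have : (1+(i:ℝ)+1) ≠ 0 := by positivity
    field_simp
    ring
  rw [he]
  exact mul_le_mul_of_nonneg_left (by linarith) (by positivity)
end
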